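/- Let α, β > 0 and let f, g : J → ℝ be C² functions on an open interval J with g'(u)² − f'(u)² = 1, α²f(u)² + β²g(u)² > 0, and f'(u) ≠ 0 for all u ∈ J. Then the zero mean curvature equation −(g'f'' − f'g'')/(g'² − f'²) = (α²f g' + β²g f')/(α²f² + β²g²) holds on J if and only if there exists a constant A > 0 such that f'(u)² = (A − α²f(u)²)/(α²f(u)² + β²g(u)²) and g'(u)² = (A + β²g(u)²)/(α²f(u)² + β²g(u)²) for all u ∈ J. -/

import Mathlib

theorem moore_zero_mean_curvature_iff_first_integrals
    (α β : ℝ) (hα : 0 < α) (hβ : 0 < β)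
    (J : Set ℝ) (hJopen : IsOpen J) (hJconn : J.OrdConnected)
    (f g : ℝ → ℝ) (hf : ContDiffOn ℝ 2 f J) (hg : ContDiffOn ℝ 2 g J)
    (harc : ∀ u ∈ J, deriv g u ^ 2 - deriv f u ^ 2 = 1)
    (hpos : ∀ u ∈ J, 0 < α ^ 2 * f u ^ 2 + β ^ 2 * g u ^ 2)
    (hf' : ∀ u ∈ J, deriv f u ≠ 0) :
    (∀ u ∈ J,
      -(deriv g u * deriv (deriv f) u - deriv f u * deriv (deriv g) u) /
          (deriv g u ^ 2 - deriv f u ^ 2) =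
        (α ^ 2 * f u * deriv g u + β ^ 2 * g u * deriv f u) /
          (α ^ 2 * f u ^ 2 + β ^ 2 * g u ^ 2)) ↔
    (∃ A : ℝ, 0 < A ∧ ∀ u ∈ J,
      deriv f u ^ 2 =
        (A - α ^ 2 * f u ^ 2) / (α ^ 2 * f u ^ 2 + β ^ 2 * g u ^ 2) ∧
      deriv g u ^ 2 =
        (A + β ^ 2 * g u ^ 2) / (α ^ 2 * f u ^ 2 + β ^ 2 * g u ^ 2)) := by
  -- notation
  set D : ℝ → ℝ := fun u => α ^ 2 * f u ^ 2 + β ^ 2 * g u ^ 2 with hDdef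
  set F : ℝ → ℝ := fun u => deriv f u ^ 2 * D u + α ^ 2 * f u ^ 2 with hFdef
  -- basic differentiability facts
  have hf1 : ContDiffOn ℝ 1 (deriv f) J := hf.deriv_of_isOpen hJopen (by norm_num)
  have hg1 : ContDiffOn ℝ 1 (deriv g) J := hg.deriv_of_isOpen hJopen (by norm_num)
  have hfd : ∀ u ∈ J, HasDerivAt f (deriv f u) u := fun u hu =>
    (((hf.differentiableOn (by norm_num)) u hu).differentiableAt
      (hJopen.mem_nhds hu)).hasDerivAt
  have hgd : ∀ u ∈ J, HasDerivAt g (deriv g u) u := fun u hu =>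
    (((hg.differentiableOn (by norm_num)) u hu).differentiableAt
      (hJopen.mem_nhds hu)).hasDerivAt
  have hfd2 : ∀ u ∈ J, HasDerivAt (deriv f) (deriv (deriv f) u) u := fun u hu =>
    (((hf1.differentiableOn one_ne_zero) u hu).differentiableAt (hJopen.mem_nhds hu)).hasDerivAt
  have hgd2 : ∀ u ∈ J, HasDerivAt (deriv g) (deriv (deriv g) u) u := fun u hu =>
    (((hg1.differentiableOn one_ne_zero) u hu).differentiableAt (hJopen.mem_nhds hu)).hasDerivAt
  have hg'ne : ∀ u ∈ J, deriv g u ≠ 0 := by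
    intro u hu
    have := harc u hu
    intro h
    have := hf' u hu
    nlinarith [sq_nonneg (deriv f u), sq_abs (deriv f u)]
  -- differentiating the arclength relation : g' g'' = f' f''
  have harc' : ∀ u ∈ J, deriv g u * deriv (deriv g) u = deriv f u * deriv (deriv f) u := by
    intro u hu
    have h1 : HasDerivAt (fun u => deriv g u ^ 2 - deriv f u ^ 2)
        (2 * deriv g u * deriv (deriv g) u - 2 * deriv f u * deriv (deriv f) u) u := by
      have := ((hgd2 u hu).pow 2).sub ((hfd2 u hu).pow 2)
      simpa [Pi.sub_def, Pi.pow_def, mul_comm, mul_assoc, mul_left_comm] using this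
    have h2 : deriv (fun u => deriv g u ^ 2 - deriv f u ^ 2) u = 0 := by
      have hev : (fun u => deriv g u ^ 2 - deriv f u ^ 2) =ᶠ[nhds u] (fun _ => (1:ℝ)) := by
        filter_upwards [hJopen.mem_nhds hu] with x hx using harc x hx
      rw [hev.deriv_eq]; simp
    have := h1.deriv
    rw [h2] at this
    linarith
  -- derivative of the first integral F
  have hFD : ∀ u ∈ J, HasDerivAt F
      (2 * deriv f u * (deriv (deriv f) u * D u
        + α ^ 2 * f u * deriv g u ^ 2 + β ^ 2 * g u * deriv f u * deriv g u)) u := by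
    intro u hu
    have hD : HasDerivAt D (α ^ 2 * (2 * f u * deriv f u) + β ^ 2 * (2 * g u * deriv g u)) u := by
      have := (((hfd u hu).pow 2).const_mul (α ^ 2)).add (((hgd u hu).pow 2).const_mul (β ^ 2))
      simpa [Pi.add_def, hDdef, pow_succ, mul_comm, mul_assoc, mul_left_comm] using this
    have h1 : HasDerivAt (fun u => deriv f u ^ 2 * D u)
        ((2 * deriv f u * deriv (deriv f) u) * D u
          + deriv f u ^ 2 * (α ^ 2 * (2 * f u * deriv f u) + β ^ 2 * (2 * g u * deriv g u))) u := by
      have := ((hfd2 u hu).pow 2).mul hD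
      simpa [Pi.mul_def, Pi.pow_def, mul_comm, mul_assoc, mul_left_comm] using this
    have h2 : HasDerivAt (fun u => α ^ 2 * f u ^ 2) (α ^ 2 * (2 * f u * deriv f u)) u := by
      have := ((hfd u hu).pow 2).const_mul (α ^ 2)
      simpa [mul_comm, mul_assoc, mul_left_comm] using this
    have : HasDerivAt F _ u := h1.add h2
    have harcu : deriv g u ^ 2 = 1 + deriv f u ^ 2 := by have := harc u hu; linarith
    convert this using 1
    simp only [hDdef]
    rw [harcu]; ring
  -- equivalence of the minimal equation with E = 0
  have hEeq : ∀ u ∈ J,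
      (-(deriv g u * deriv (deriv f) u - deriv f u * deriv (deriv g) u) /
          (deriv g u ^ 2 - deriv f u ^ 2) =
        (α ^ 2 * f u * deriv g u + β ^ 2 * g u * deriv f u) /
          (α ^ 2 * f u ^ 2 + β ^ 2 * g u ^ 2)) ↔
      (deriv (deriv f) u * D u
        + α ^ 2 * f u * deriv g u ^ 2 + β ^ 2 * g u * deriv f u * deriv g u) = 0 := by
    intro u hu
    have hD0 := (hpos u hu).ne'
    have hgne := hg'ne u hu
    have ha := harc u hu
    have ha' := harc' u hu
    rw [ha, div_one, eq_div_iff hD0]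
    simp only [hDdef]
    constructor
    · intro h
      linear_combination (-(deriv g u)) * h
        + (-(deriv (deriv f) u * (α ^ 2 * f u ^ 2 + β ^ 2 * g u ^ 2))) * ha
        + (deriv f u * (α ^ 2 * f u ^ 2 + β ^ 2 * g u ^ 2)) * ha'
    · intro h
      apply mul_left_cancel₀ hgne
      linear_combination (deriv f u * (α ^ 2 * f u ^ 2 + β ^ 2 * g u ^ 2)) * ha'
        + (-(deriv (deriv f) u * (α ^ 2 * f u ^ 2 + β ^ 2 * g u ^ 2))) * ha
        + (-1 : ℝ) * h
  constructor
  · -- forward: minimal ⇒ first integrals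
    intro hmin
    rcases Set.eq_empty_or_nonempty J with hJ | ⟨u₀, hu₀⟩
    · exact ⟨1, one_pos, by simp [hJ]⟩
    -- F has zero derivative on J
    have hF0 : ∀ u ∈ J, HasDerivAt F 0 u := by
      intro u hu
      have := hFD u hu
      rw [(hEeq u hu).mp (hmin u hu)] at this
      simpa using this
    have hconv : Convex ℝ J := by
      rw [convex_iff_ordConnected]; exact hJconn
    have hconst : ∀ u ∈ J, F u = F u₀ := by
      intro u hu
      apply hconv.is_const_of_fderivWithin_eq_zero (𝕜 := ℝ)
      · intro x hx
        exact ((hF0 x hx).differentiableAt.differentiableWithinAt)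
      · intro x hx
        rw [fderivWithin_of_isOpen hJopen hx]
        have : HasFDerivAt F ((1 : ℝ →L[ℝ] ℝ).smulRight (0:ℝ)) x := (hF0 x hx).hasFDerivAt
        rw [this.fderiv]
        ext; simp
      · exact hu
      · exact hu₀
    refine ⟨F u₀, ?_, ?_⟩
    · have hD0 := hpos u₀ hu₀
      have hfne := hf' u₀ hu₀
      have : 0 < deriv f u₀ ^ 2 := by positivity
      simp only [hFdef, hDdef]
      nlinarith [sq_nonneg (f u₀), mul_pos this hD0]
    · intro u hu
      have hc := hconst u hu
      have hD0 : (0:ℝ) < D u := hpos u hu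
      have ha := harc u hu
      simp only [hFdef, hDdef] at hc
      have hD0' := (hpos u hu).ne'
      constructor
      · rw [eq_div_iff hD0', hFdef]
        simp only [hDdef]
        linarith
      · rw [eq_div_iff hD0', hFdef]
        simp only [hDdef]
        have hg2 : deriv g u ^ 2 = 1 + deriv f u ^ 2 := by linarith
        rw [hg2]
        ring_nf
        ring_nf at hc
        linarith
  · -- backward: first integrals ⇒ minimal
    rintro ⟨A, hA, hAeq⟩ u hu
    rw [hEeq u hu]
    have hF0 : ∀ x ∈ J, F x = A := by
      intro x hx
      have hD0 := (hpos x hx).ne'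
      have h1 := (hAeq x hx).1
      rw [eq_div_iff hD0] at h1
      simp only [hFdef, hDdef]
      linarith [h1]
    have hder : deriv F u = 0 := by
      have hev : F =ᶠ[nhds u] (fun _ => A) := by
        filter_upwards [hJopen.mem_nhds hu] with x hx using hF0 x hx
      rw [hev.deriv_eq]; simp
    have := (hFD u hu).deriv
    rw [hder] at this
    have hfne := hf' u hu
    rcases mul_eq_zero.mp this.symm with h | h
    · exact absurd (by linarith : deriv f u = 0) hfne
    · exact h
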